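/- With the min-cost flow instance (G, c)^i_x of the previous construction, a solution x ≥ 0 satisfies the robust constraint ∑_j (ā_{ij} + d^S_{ij}) x_j ≤ b_i for every feasible scenario S if and only if ā_i'x − c*_i(x) ≤ b_i, where c*_i(x) is the minimum cost of an integral s–t flow of value n in (G, c)^i_x. -/

import Mathlib

open scoped Classical

/-- `v` falls in band `k`: band `K⁻` is the single point `d K⁻`,
band `k > K⁻` is the interval `(d (k-1), d k]`. -/
def inBand (d : ℤ → ℝ) (Km k : ℤ) (v : ℝ) : Prop :=
  if k = Km then v = d Km else d (k-1) < v ∧ v ≤ d k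

/-- Integral `s`-`t` flow of value `n` in the auxiliary network: components are the
flows on arcs `(s,v_j)`, `(v_j,w_k)` and `(w_k,t)`. -/
def IsMBFlow (n : ℕ) (Km Kp : ℤ) (θ : ℤ → ℤ)
    (f : (Fin n → ℤ) × (Fin n → ℤ → ℤ) × (ℤ → ℤ)) : Prop :=
  (∀ j, 0 ≤ f.1 j ∧ f.1 j ≤ 1) ∧
  (∀ j, ∀ k ∈ Finset.Icc Km Kp, 0 ≤ f.2.1 j k ∧ f.2.1 j k ≤ 1) ∧
  (∀ k ∈ Finset.Icc Km Kp, 0 ≤ f.2.2 k ∧ f.2.2 k ≤ θ k) ∧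
  (∀ j, f.1 j = ∑ k ∈ Finset.Icc Km Kp, f.2.1 j k) ∧
  (∀ k ∈ Finset.Icc Km Kp, ∑ j, f.2.1 j k = f.2.2 k) ∧
  (∑ j, f.1 j = (n : ℤ))

/-- Cost of a flow: arcs `(v_j,w_k)` have cost `-d^k_j x_j`, all other arcs cost 0. -/
noncomputable def MBcost (n : ℕ) (Km Kp : ℤ) (d : Fin n → ℤ → ℝ) (x : Fin n → ℝ)
    (f : (Fin n → ℤ) × (Fin n → ℤ → ℤ) × (ℤ → ℤ)) : ℝ :=
  ∑ j, ∑ k ∈ Finset.Icc Km Kp, (-(d j k * x j)) * (f.2.1 j k : ℝ)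

lemma Icc_split (a c b : ℤ) (h1 : a ≤ c) (h2 : c ≤ b) (f : ℤ → ℤ) :
    ∑ i ∈ Finset.Icc a b, f i
      = ∑ i ∈ Finset.Icc a c, f i + ∑ i ∈ Finset.Icc (c+1) b, f i := by
  rw [← Finset.sum_union]
  · congr 1; ext i; simp only [Finset.mem_union, Finset.mem_Icc]; omega
  · rw [Finset.disjoint_left]; intro i hi hi'
    simp only [Finset.mem_Icc] at hi hi'; omega

lemma band_le (d : ℤ → ℝ) (Km k : ℤ) (v : ℝ) (h : inBand d Km k v) : v ≤ d k := by
  unfold inBand at h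
  split_ifs at h with h'
  · subst h'; exact le_of_eq h
  · exact h.2

lemma band_unique (d : ℤ → ℝ) (Km Kp : ℤ) (hmono : StrictMonoOn d (Set.Icc Km Kp))
    (k k' : ℤ) (hk : k ∈ Finset.Icc Km Kp) (hk' : k' ∈ Finset.Icc Km Kp) (v : ℝ)
    (h : inBand d Km k v) (h' : inBand d Km k' v) : k = k' := by
  simp only [Finset.mem_Icc] at hk hk'
  by_contra hne
  rcases lt_or_gt_of_ne hne with hlt | hlt
  · -- k < k'
    unfold inBand at h h'
    have hk'Km : k' ≠ Km := by omega
    rw [if_neg hk'Km] at h'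
    have h1 : d (k'-1) < v := h'.1
    have hmem1 : (k'-1) ∈ Set.Icc Km Kp := by simp; omega
    split_ifs at h with hKm
    · have : d Km ≤ d (k'-1) := hmono.monotoneOn (by simp; omega) hmem1 (by omega)
      rw [h] at h1; linarith
    · have h2 : v ≤ d k := h.2
      have : d k ≤ d (k'-1) := hmono.monotoneOn (by simp; omega) hmem1 (by omega)
      linarith
  · unfold inBand at h h'
    have hkKm : k ≠ Km := by omega
    rw [if_neg hkKm] at h
    have h1 : d (k-1) < v := h.1
    have hmem1 : (k-1) ∈ Set.Icc Km Kp := by simp; omega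
    split_ifs at h' with hKm
    · have : d Km ≤ d (k-1) := hmono.monotoneOn (by simp; omega) hmem1 (by omega)
      rw [h'] at h1; linarith
    · have h2 : v ≤ d k' := h'.2
      have : d k' ≤ d (k-1) := hmono.monotoneOn (by simp; omega) hmem1 (by omega)
      linarith

lemma band_exists (d : ℤ → ℝ) (Km Kp : ℤ) (hKK : Km ≤ Kp)
    (hmono : StrictMonoOn d (Set.Icc Km Kp)) (v : ℝ)
    (h1 : d Km ≤ v) (h2 : v ≤ d Kp) :
    ∃ k ∈ Finset.Icc Km Kp, inBand d Km k v := by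
  by_cases hv : v = d Km
  · exact ⟨Km, by simp [hKK], by unfold inBand; simp [hv]⟩
  · have hv' : d Km < v := lt_of_le_of_ne h1 (fun h => hv h.symm)
    set T := (Finset.Icc Km Kp).filter (fun k => v ≤ d k) with hT
    have hTne : T.Nonempty := ⟨Kp, by simp [hT, hKK, h2]⟩
    set k0 := T.min' hTne with hk0
    have hk0T : k0 ∈ T := T.min'_mem hTne
    have hk0I : k0 ∈ Finset.Icc Km Kp := (Finset.mem_filter.1 hk0T).1
    have hk0v : v ≤ d k0 := by
      have := (Finset.mem_filter.1 hk0T).2; simpa using this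
    simp only [Finset.mem_Icc] at hk0I
    have hk0Km : k0 ≠ Km := fun h => by rw [h] at hk0v; linarith
    refine ⟨k0, ?_, ?_⟩
    · simp only [Finset.mem_Icc]; omega
    unfold inBand
    rw [if_neg hk0Km]
    refine ⟨?_, hk0v⟩
    by_contra hc
    push_neg at hc
    have : (k0 - 1) ∈ T := by
      simp only [hT, Finset.mem_filter, Finset.mem_Icc]; exact ⟨by omega, hc⟩
    have := T.min'_le _ this
    omega


lemma rearrange (n : ℕ) : ∀ m : ℕ, ∀ Km Kp : ℤ, Km ≤ Kp → (Kp - Km).toNat = m →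
    ∀ (J : Finset (Fin n)) (k : Fin n → ℤ) (θ : ℤ → ℤ),
    (∀ j ∈ J, k j ∈ Finset.Icc Km Kp) →
    (∀ i ∈ Finset.Icc Km Kp, 0 ≤ θ i) →
    (∀ q ∈ Finset.Icc Km Kp,
      ∑ i ∈ Finset.Icc Km q, θ i ≤ ((J.filter (fun j => k j ≤ q)).card : ℤ)) →
    (∑ i ∈ Finset.Icc Km Kp, θ i = (J.card : ℤ)) →
    ∃ σ : Fin n → ℤ, (∀ j ∈ J, k j ≤ σ j ∧ σ j ∈ Finset.Icc Km Kp) ∧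
      (∀ q ∈ Finset.Icc Km Kp, (((J.filter (fun j => σ j = q)).card : ℤ) = θ q)) := by
  intro m
  induction m with
  | zero =>
    intro Km Kp hKK hm J k θ hkJ hθ0 hdom htot
    have hKe : Kp = Km := by omega
    refine ⟨k, fun j hj => ⟨le_refl _, hkJ j hj⟩, ?_⟩
    intro q hq
    simp only [Finset.mem_Icc] at hq
    have hq' : q = Km := by omega
    rw [hKe, Finset.Icc_self, Finset.sum_singleton] at htot
    rw [hq']
    have : J.filter (fun j => k j = Km) = J := by
      apply Finset.filter_true_of_mem
      intro j hj; have := hkJ j hj; simp only [Finset.mem_Icc, hKe] at this; omega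
    rw [this, htot]
  | succ m ih =>
    intro Km Kp hKK hm J k θ hkJ hθ0 hdom htot
    have hKlt : Km < Kp := by omega
    -- set A := elements in band Km
    set A := J.filter (fun j => k j = Km) with hA
    have hθKm0 : 0 ≤ θ Km := hθ0 Km (by simp [Finset.mem_Icc]; omega)
    have hdomKm := hdom Km (by simp [Finset.mem_Icc]; omega)
    rw [Finset.Icc_self, Finset.sum_singleton] at hdomKm
    have hAcard : (θ Km).toNat ≤ A.card := by
      have : J.filter (fun j => k j ≤ Km) = A := by
        apply Finset.filter_congr
        intro j hj
        have := hkJ j hj; simp only [Finset.mem_Icc] at this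
        constructor <;> (intro h; omega)
      rw [this] at hdomKm
      omega
    obtain ⟨B, hBA, hBcard⟩ := Finset.exists_subset_card_eq hAcard
    have hBJ : B ⊆ J := hBA.trans (Finset.filter_subset _ _)
    -- recurse
    set J' := J \ B with hJ'
    set k' : Fin n → ℤ := fun j => if k j = Km then Km + 1 else k j with hk'
    have hrec := ih (Km+1) Kp (by omega) (by omega) J' k' θ ?_ ?_ ?_ ?_
    · obtain ⟨σ', hσ'1, hσ'2⟩ := hrec
      set σ : Fin n → ℤ := fun j => if j ∈ B then Km else σ' j with hσ
      refine ⟨σ, ?_, ?_⟩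
      · intro j hj
        by_cases hjB : j ∈ B
        · have hjA := hBA hjB
          rw [hA, Finset.mem_filter] at hjA
          simp only [hσ, if_pos hjB]
          refine ⟨le_of_eq hjA.2, ?_⟩
          simp only [Finset.mem_Icc]; omega
        · have hjJ' : j ∈ J' := by rw [hJ', Finset.mem_sdiff]; exact ⟨hj, hjB⟩
          have := hσ'1 j hjJ'
          simp only [Finset.mem_Icc] at this ⊢
          simp only [hσ, if_neg hjB]
          constructor
          · refine le_trans ?_ this.1
            simp only [hk']; split_ifs with h <;> omega
          · omega
      · intro q hq
        simp only [Finset.mem_Icc] at hq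
        by_cases hqKm : q = Km
        · rw [hqKm]
          have : J.filter (fun j => σ j = Km) = B := by
            ext j
            simp only [Finset.mem_filter]
            constructor
            · rintro ⟨hjJ, hjσ⟩
              by_contra hjB
              have hjJ' : j ∈ J' := by rw [hJ', Finset.mem_sdiff]; exact ⟨hjJ, hjB⟩
              have := (hσ'1 j hjJ').2
              simp only [Finset.mem_Icc] at this
              simp only [hσ, if_neg hjB] at hjσ
              omega
            · intro hjB
              refine ⟨hBJ hjB, ?_⟩
              simp only [hσ, if_pos hjB]
          rw [this, hBcard]
          omega
        · have hq1 : q ∈ Finset.Icc (Km+1) Kp := by simp only [Finset.mem_Icc]; omega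
          have h2 := hσ'2 q hq1
          rw [← h2]
          have hfe : J.filter (fun j => σ j = q) = J'.filter (fun j => σ' j = q) := by
            ext j
            simp only [Finset.mem_filter, hJ', Finset.mem_sdiff]
            constructor
            · rintro ⟨hjJ, hjσ⟩
              have hjB : j ∉ B := by
                intro hjB; simp only [hσ, if_pos hjB] at hjσ; exact hqKm hjσ.symm
              exact ⟨⟨hjJ, hjB⟩, by simpa [hσ, if_neg hjB] using hjσ⟩
            · rintro ⟨⟨hjJ, hjB⟩, hjσ⟩
              exact ⟨hjJ, by simpa [hσ, if_neg hjB] using hjσ⟩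
          rw [hfe]
    · -- k' j ∈ Icc (Km+1) Kp
      intro j hj
      rw [hJ', Finset.mem_sdiff] at hj
      have := hkJ j hj.1
      simp only [Finset.mem_Icc] at this ⊢
      simp only [hk']; split_ifs <;> omega
    · intro i hi; exact hθ0 i (by simp only [Finset.mem_Icc] at hi ⊢; omega)
    · -- dominance
      intro q hq
      simp only [Finset.mem_Icc] at hq
      have hd := hdom q (by simp only [Finset.mem_Icc]; omega)
      have hsplit : ∑ i ∈ Finset.Icc Km q, θ i
          = θ Km + ∑ i ∈ Finset.Icc (Km+1) q, θ i := by
        rw [Icc_split Km Km q (le_refl _) (by omega)]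
        simp
      have hset : J'.filter (fun j => k' j ≤ q) = (J.filter (fun j => k j ≤ q)) \ B := by
        ext j
        simp only [Finset.mem_filter, hJ', Finset.mem_sdiff, Finset.mem_filter]
        constructor
        · rintro ⟨⟨hjJ, hjB⟩, hjq⟩
          simp only [hk'] at hjq
          refine ⟨⟨hjJ, ?_⟩, hjB⟩
          split_ifs at hjq with h <;> omega
        · rintro ⟨⟨hjJ, hjq⟩, hjB⟩
          refine ⟨⟨hjJ, hjB⟩, ?_⟩
          simp only [hk']; split_ifs with h <;> omega
      have hBsub : B ⊆ J.filter (fun j => k j ≤ q) := by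
        intro j hjB
        have hjA := hBA hjB
        rw [hA, Finset.mem_filter] at hjA
        simp only [Finset.mem_filter]
        exact ⟨hjA.1, by omega⟩
      rw [hset, Finset.card_sdiff_of_subset hBsub, hBcard]
      have hc : B.card ≤ (J.filter (fun j => k j ≤ q)).card := Finset.card_le_card hBsub
      rw [hsplit] at hd
      push_cast [hBcard]
      omega
    · -- total
      have hsplit : ∑ i ∈ Finset.Icc Km Kp, θ i
          = θ Km + ∑ i ∈ Finset.Icc (Km+1) Kp, θ i := by
        rw [Icc_split Km Km Kp (le_refl _) (by omega)]
        simp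
      have hJcard : (J'.card : ℤ) = J.card - θ Km := by
        rw [hJ', Finset.card_sdiff_of_subset hBJ]
        have : B.card ≤ J.card := Finset.card_le_card hBJ
        push_cast [hBcard]
        omega
      rw [hJcard, ← htot, hsplit]
      ring

/-- the flow induced by an assignment -/
def flowOf (n : ℕ) (θ : ℤ → ℤ) (σ : Fin n → ℤ) :
    (Fin n → ℤ) × (Fin n → ℤ → ℤ) × (ℤ → ℤ) :=
  (fun _ => 1, fun j k => if σ j = k then 1 else 0, θ)

lemma flowOf_isFlow (n : ℕ) (Km Kp : ℤ) (θ : ℤ → ℤ)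
    (hθ0 : ∀ k ∈ Finset.Icc Km Kp, 0 ≤ θ k)
    (σ : Fin n → ℤ) (hσI : ∀ j, σ j ∈ Finset.Icc Km Kp)
    (hσθ : ∀ q ∈ Finset.Icc Km Kp,
      ((Finset.univ.filter (fun j => σ j = q)).card : ℤ) = θ q) :
    IsMBFlow n Km Kp θ (flowOf n θ σ) := by
  have hsum1 : ∀ j : Fin n, ∑ k ∈ Finset.Icc Km Kp, (if σ j = k then (1:ℤ) else 0) = 1 := by
    intro j
    rw [Finset.sum_ite_eq (Finset.Icc Km Kp) (σ j) (fun _ => (1:ℤ))]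
    rw [if_pos (hσI j)]
  refine ⟨fun j => ⟨zero_le_one, le_refl _⟩, ?_, ?_, ?_, ?_, ?_⟩
  · intro j k _; dsimp [flowOf]; split_ifs <;> omega
  · intro k hk; exact ⟨hθ0 k hk, le_refl _⟩
  · intro j; exact (hsum1 j).symm
  · intro k hk
    show (∑ j, if σ j = k then (1:ℤ) else 0) = θ k
    rw [Finset.sum_boole]
    exact hσθ k hk
  · show (∑ _j : Fin n, (1:ℤ)) = (n:ℤ)
    simp

lemma flowOf_cost (n : ℕ) (Km Kp : ℤ) (d : Fin n → ℤ → ℝ) (x : Fin n → ℝ)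
    (θ : ℤ → ℤ) (σ : Fin n → ℤ) (hσI : ∀ j, σ j ∈ Finset.Icc Km Kp) :
    MBcost n Km Kp d x (flowOf n θ σ) = ∑ j, -(d j (σ j) * x j) := by
  unfold MBcost flowOf
  apply Finset.sum_congr rfl
  intro j _
  have hterm : ∀ k ∈ Finset.Icc Km Kp,
      (-(d j k * x j)) * (((if σ j = k then (1:ℤ) else 0) : ℤ) : ℝ)
        = if σ j = k then -(d j (σ j) * x j) else 0 := by
    intro k _
    by_cases h : σ j = k
    · rw [if_pos h, if_pos h, h]; push_cast; ring
    · rw [if_neg h, if_neg h]; push_cast; ring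
  rw [Finset.sum_congr rfl hterm,
    Finset.sum_ite_eq (Finset.Icc Km Kp) (σ j) (fun _ => -(d j (σ j) * x j)),
    if_pos (hσI j)]

lemma flow_decomp (n : ℕ) (Km Kp : ℤ) (hKK : Km ≤ Kp) (θ : ℤ → ℤ)
    (hθtot : ∑ k ∈ Finset.Icc Km Kp, θ k = (n : ℤ))
    (f : (Fin n → ℤ) × (Fin n → ℤ → ℤ) × (ℤ → ℤ)) (hf : IsMBFlow n Km Kp θ f) :
    ∃ σ : Fin n → ℤ, (∀ j, σ j ∈ Finset.Icc Km Kp) ∧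
      (∀ q ∈ Finset.Icc Km Kp,
        ((Finset.univ.filter (fun j => σ j = q)).card : ℤ) = θ q) ∧
      (∀ j, ∀ k ∈ Finset.Icc Km Kp, f.2.1 j k = if σ j = k then 1 else 0) := by
  obtain ⟨h1, h2, h3, h4, h5, h6⟩ := hf
  -- f.1 j = 1 for all j
  have hf1 : ∀ j, f.1 j = 1 := by
    intro j
    have hzero : ∑ j', ((1:ℤ) - f.1 j') = 0 := by
      rw [Finset.sum_sub_distrib, h6]; simp
    have := (Finset.sum_eq_zero_iff_of_nonneg
      (fun i _ => by have := h1 i; omega)).1 hzero j (Finset.mem_univ j)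
    omega
  -- each row has exactly one 1
  have hone : ∀ j, ∃ k ∈ Finset.Icc Km Kp, f.2.1 j k = 1 ∧
      ∀ k' ∈ Finset.Icc Km Kp, k' ≠ k → f.2.1 j k' = 0 := by
    intro j
    have hsum : ∑ k ∈ Finset.Icc Km Kp, f.2.1 j k = 1 := by rw [← h4 j]; exact hf1 j
    have hex : ∃ k ∈ Finset.Icc Km Kp, f.2.1 j k ≠ 0 := by
      by_contra hc
      push_neg at hc
      rw [Finset.sum_eq_zero (fun k hk => hc k hk)] at hsum
      omega
    obtain ⟨k, hkI, hk0⟩ := hex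
    have hk1 : f.2.1 j k = 1 := by have := h2 j k hkI; omega
    refine ⟨k, hkI, hk1, ?_⟩
    intro k' hk'I hk'ne
    have hrest : ∑ k'' ∈ (Finset.Icc Km Kp).erase k, f.2.1 j k'' = 0 := by
      have h := Finset.add_sum_erase (Finset.Icc Km Kp) (fun k'' => f.2.1 j k'') hkI
      rw [hsum] at h
      rw [hk1] at h
      omega
    have hnn : ∀ k'' ∈ (Finset.Icc Km Kp).erase k, 0 ≤ f.2.1 j k'' := by
      intro k'' hk''; exact (h2 j k'' (Finset.mem_of_mem_erase hk'')).1
    have := (Finset.sum_eq_zero_iff_of_nonneg hnn).1 hrest k' (Finset.mem_erase.2 ⟨hk'ne, hk'I⟩)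
    exact this
  choose σ hσI hσ1 hσ0 using hone
  -- f.2.2 k = θ k on Icc
  have hf22 : ∀ k ∈ Finset.Icc Km Kp, f.2.2 k = θ k := by
    have hsum2 : ∑ k ∈ Finset.Icc Km Kp, f.2.2 k = (n : ℤ) := by
      rw [← h6]
      rw [Finset.sum_congr rfl (fun k hk => (h5 k hk).symm)]
      rw [Finset.sum_comm]
      exact Finset.sum_congr rfl (fun j _ => (h4 j).symm)
    have hzero : ∑ k ∈ Finset.Icc Km Kp, (θ k - f.2.2 k) = 0 := by
      rw [Finset.sum_sub_distrib, hθtot, hsum2]; ring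
    intro k hk
    have := (Finset.sum_eq_zero_iff_of_nonneg
      (fun k' hk' => by have := (h3 k' hk').2; omega)).1 hzero k hk
    omega
  have hrow : ∀ j, ∀ k ∈ Finset.Icc Km Kp, f.2.1 j k = if σ j = k then 1 else 0 := by
    intro j k hk
    by_cases h : σ j = k
    · rw [if_pos h, ← h]; exact hσ1 j
    · rw [if_neg h]; exact hσ0 j k hk (fun hh => h hh.symm)
  refine ⟨σ, hσI, ?_, hrow⟩
  intro q hq
  have h7 : ∑ j, f.2.1 j q = ∑ j, if σ j = q then (1:ℤ) else 0 :=
    Finset.sum_congr rfl (fun j _ => hrow j q hq)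
  have hb : (∑ j, if σ j = q then (1:ℤ) else 0)
      = ((Finset.univ.filter (fun j => σ j = q)).card : ℤ) := by
    rw [Finset.sum_boole]
  rw [← hb, ← h7, h5 q hq, hf22 q hq]

theorem stmt9 (n : ℕ) (Km Kp : ℤ) (hKm : Km ≤ 0) (hKp : 0 ≤ Kp)
    (d : Fin n → ℤ → ℝ)
    (hmono : ∀ j, StrictMonoOn (d j) (Set.Icc (Km:ℤ) Kp))
    (hzero : ∀ j, d j 0 = 0)
    (l u : ℤ → ℤ)
    (hbounds : ∀ k ∈ Finset.Icc Km Kp, 0 ≤ l k ∧ l k ≤ u k ∧ u k ≤ (n:ℤ))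
    (hu0 : u 0 = n)
    (hsuml : ∑ k ∈ Finset.Icc Km Kp, l k ≤ (n:ℤ))
    (p : ℤ) (hp : p ∈ Finset.Icc Km Kp)
    (hpfeas : (∑ i ∈ Finset.Icc Km p, l i) + (∑ i ∈ Finset.Icc (p+1) Kp, u i) ≤ (n:ℤ))
    (hpmin : ∀ k ∈ Finset.Icc Km Kp,
      (∑ i ∈ Finset.Icc Km k, l i) + (∑ i ∈ Finset.Icc (k+1) Kp, u i) ≤ (n:ℤ) → p ≤ k)
    (θ : ℤ → ℤ)
    (hθlt : ∀ k, k < p → θ k = l k)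
    (hθgt : ∀ k, p < k → θ k = u k)
    (hθp : θ p = n - ∑ k ∈ (Finset.Icc Km Kp).erase p, θ k)
    (abar : Fin n → ℝ) (b : ℝ) (x : Fin n → ℝ) (hx : ∀ j, 0 ≤ x j) :
    ∃ f : (Fin n → ℤ) × (Fin n → ℤ → ℤ) × (ℤ → ℤ),
      IsMBFlow n Km Kp θ f ∧
      (∀ f', IsMBFlow n Km Kp θ f' → MBcost n Km Kp d x f ≤ MBcost n Km Kp d x f') ∧
      ((∀ S : Fin n → ℝ,
          (∀ j, d j Km ≤ S j ∧ S j ≤ d j Kp) →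
          (∀ k ∈ Finset.Icc Km Kp,
            l k ≤ ((Finset.univ.filter (fun j => inBand (d j) Km k (S j))).card : ℤ) ∧
            ((Finset.univ.filter (fun j => inBand (d j) Km k (S j))).card : ℤ) ≤ u k) →
          ∑ j, (abar j + S j) * x j ≤ b) ↔
        (∑ j, abar j * x j) - MBcost n Km Kp d x f ≤ b) := by
  have hKK : Km ≤ Kp := le_trans hKm hKp
  simp only [Finset.mem_Icc] at hp
  have hpI : p ∈ Finset.Icc Km Kp := by simp only [Finset.mem_Icc]; omega
  -- sum of θ is n
  have hθsum : ∑ k ∈ Finset.Icc Km Kp, θ k = (n:ℤ) := by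
    have h := Finset.add_sum_erase (Finset.Icc Km Kp) θ hpI
    omega
  -- write the erased sum via l and u
  have herase : ∑ k ∈ (Finset.Icc Km Kp).erase p, θ k
      = ∑ i ∈ Finset.Icc Km (p-1), l i + ∑ i ∈ Finset.Icc (p+1) Kp, u i := by
    have hsplit : (Finset.Icc Km Kp).erase p
        = Finset.Icc Km (p-1) ∪ Finset.Icc (p+1) Kp := by
      ext i; simp only [Finset.mem_erase, Finset.mem_union, Finset.mem_Icc]; omega
    rw [hsplit, Finset.sum_union (by
      rw [Finset.disjoint_left]; intro i hi hi'
      simp only [Finset.mem_Icc] at hi hi'; omega)]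
    congr 1
    · exact Finset.sum_congr rfl (fun i hi => hθlt i (by simp only [Finset.mem_Icc] at hi; omega))
    · exact Finset.sum_congr rfl (fun i hi => hθgt i (by simp only [Finset.mem_Icc] at hi; omega))
  have hslp : ∑ i ∈ Finset.Icc Km p, l i = ∑ i ∈ Finset.Icc Km (p-1), l i + l p := by
    have hins : Finset.Icc Km p = insert p (Finset.Icc Km (p-1)) := by
      ext i; simp only [Finset.mem_insert, Finset.mem_Icc]; omega
    rw [hins, Finset.sum_insert (by simp only [Finset.mem_Icc]; omega)]
    ring
  -- θ p bounds
  have hθpl : l p ≤ θ p := by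
    have h1 := hpfeas
    rw [hslp] at h1
    rw [hθp, herase]
    omega
  have hθpu : θ p ≤ u p := by
    by_cases hpKm : p = Km
    · have husum : (n:ℤ) ≤ ∑ i ∈ Finset.Icc Km Kp, u i := by
        have h0I : (0:ℤ) ∈ Finset.Icc Km Kp := by simp only [Finset.mem_Icc]; omega
        have := Finset.single_le_sum (f := u)
          (fun i hi => le_trans (hbounds i hi).1 (hbounds i hi).2.1) h0I
        omega
      have : ∑ i ∈ Finset.Icc Km Kp, u i
          = u p + ∑ i ∈ Finset.Icc (p+1) Kp, u i := by
        rw [hpKm] at *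
        rw [Icc_split Km Km Kp (le_refl _) hKK]
        simp
      have hl0 : ∑ i ∈ Finset.Icc Km (p-1), l i = 0 := by
        rw [hpKm]; rw [Finset.Icc_eq_empty (by omega)]; simp
      omega
    · have hp1 : p - 1 ∈ Finset.Icc Km Kp := by simp only [Finset.mem_Icc]; omega
      have := hpmin (p-1) hp1
      have hnle : ¬ ((∑ i ∈ Finset.Icc Km (p-1), l i)
          + (∑ i ∈ Finset.Icc ((p-1)+1) Kp, u i) ≤ (n:ℤ)) := by
        intro hc; have := this hc; omega
      push_neg at hnle
      have hup : ∑ i ∈ Finset.Icc ((p-1)+1) Kp, u i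
          = u p + ∑ i ∈ Finset.Icc (p+1) Kp, u i := by
        have : (p-1)+1 = p := by ring
        rw [this, Icc_split p p Kp (le_refl _) (by omega)]
        simp
      omega
  have hθl : ∀ k ∈ Finset.Icc Km Kp, l k ≤ θ k := by
    intro k hk
    rcases lt_trichotomy k p with h | h | h
    · rw [hθlt k h]
    · rw [h]; exact hθpl
    · rw [hθgt k h]; exact (hbounds k hk).2.1
  have hθu : ∀ k ∈ Finset.Icc Km Kp, θ k ≤ u k := by
    intro k hk
    rcases lt_trichotomy k p with h | h | h
    · rw [hθlt k h]; exact (hbounds k hk).2.1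
    · rw [h]; exact hθpu
    · rw [hθgt k h]
  have hθ0 : ∀ k ∈ Finset.Icc Km Kp, 0 ≤ θ k :=
    fun k hk => le_trans (hbounds k hk).1 (hθl k hk)
  -- key prefix-dominance inequality
  have hkey : ∀ (c : ℤ → ℤ), (∀ k ∈ Finset.Icc Km Kp, l k ≤ c k ∧ c k ≤ u k) →
      (∑ k ∈ Finset.Icc Km Kp, c k = (n:ℤ)) →
      ∀ q, Km ≤ q → q ≤ Kp →
        ∑ i ∈ Finset.Icc Km q, θ i ≤ ∑ i ∈ Finset.Icc Km q, c i := by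
    intro c hc hcsum q hq1 hq2
    by_cases hqp : q < p
    · have h1 : ∑ i ∈ Finset.Icc Km q, θ i = ∑ i ∈ Finset.Icc Km q, l i :=
        Finset.sum_congr rfl (fun i hi => hθlt i (by simp only [Finset.mem_Icc] at hi; omega))
      have h2 : ∑ i ∈ Finset.Icc Km q, l i ≤ ∑ i ∈ Finset.Icc Km q, c i :=
        Finset.sum_le_sum (fun i hi => (hc i (by simp only [Finset.mem_Icc] at hi ⊢; omega)).1)
      omega
    · push_neg at hqp
      have hsθ := Icc_split Km q Kp hq1 hq2 θ
      have hsc := Icc_split Km q Kp hq1 hq2 c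
      have h1 : ∑ i ∈ Finset.Icc (q+1) Kp, θ i = ∑ i ∈ Finset.Icc (q+1) Kp, u i :=
        Finset.sum_congr rfl (fun i hi => hθgt i (by simp only [Finset.mem_Icc] at hi; omega))
      have h2 : ∑ i ∈ Finset.Icc (q+1) Kp, c i ≤ ∑ i ∈ Finset.Icc (q+1) Kp, u i :=
        Finset.sum_le_sum (fun i hi => (hc i (by simp only [Finset.mem_Icc] at hi ⊢; omega)).2)
      omega
  -- existence of an assignment with band sizes θ
  have hσ0 : ∃ σ : Fin n → ℤ, (∀ j, σ j ∈ Finset.Icc Km Kp) ∧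
      (∀ q ∈ Finset.Icc Km Kp,
        ((Finset.univ.filter (fun j => σ j = q)).card : ℤ) = θ q) := by
    obtain ⟨σ, h1, h2⟩ := rearrange n ((Kp - Km).toNat) Km Kp hKK rfl Finset.univ
      (fun _ => Km) θ
      (fun j _ => by simp only [Finset.mem_Icc]; omega)
      hθ0
      (by
        intro q hq
        simp only [Finset.mem_Icc] at hq
        have hfil : Finset.univ.filter (fun _ : Fin n => Km ≤ q) = Finset.univ := by
          apply Finset.filter_true_of_mem; intro j _; omega
        rw [hfil]
        have hs := Icc_split Km q Kp hq.1 hq.2 θ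
        have hnn : 0 ≤ ∑ i ∈ Finset.Icc (q+1) Kp, θ i :=
          Finset.sum_nonneg (fun i hi => hθ0 i (by simp only [Finset.mem_Icc] at hi ⊢; omega))
        simp only [Finset.card_univ, Fintype.card_fin]
        omega)
      (by simp only [Finset.card_univ, Fintype.card_fin]; exact hθsum)
    exact ⟨σ, fun j => (h1 j (Finset.mem_univ j)).2, h2⟩
  -- minimize over valid assignments
  set V : Finset (Fin n → ℤ) :=
    (Fintype.piFinset (fun _ : Fin n => Finset.Icc Km Kp)).filter
      (fun σ => ∀ q ∈ Finset.Icc Km Kp,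
        ((Finset.univ.filter (fun j => σ j = q)).card : ℤ) = θ q) with hV
  have hmemV : ∀ σ : Fin n → ℤ, σ ∈ V ↔ ((∀ j, σ j ∈ Finset.Icc Km Kp) ∧
      (∀ q ∈ Finset.Icc Km Kp,
        ((Finset.univ.filter (fun j => σ j = q)).card : ℤ) = θ q)) := by
    intro σ
    rw [hV, Finset.mem_filter, Fintype.mem_piFinset]
  have hVne : V.Nonempty := by
    obtain ⟨σ, h1, h2⟩ := hσ0
    exact ⟨σ, (hmemV σ).2 ⟨h1, h2⟩⟩
  obtain ⟨σs, hσsV, hσsmin⟩ :=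
    Finset.exists_min_image V (fun σ => ∑ j, -(d j (σ j) * x j)) hVne
  obtain ⟨hσsI, hσsθ⟩ := (hmemV σs).1 hσsV
  refine ⟨flowOf n θ σs, flowOf_isFlow n Km Kp θ hθ0 σs hσsI hσsθ, ?_, ?_⟩
  · -- minimality
    intro f' hf'
    obtain ⟨σ', hσ'I, hσ'θ, hrow⟩ := flow_decomp n Km Kp hKK θ hθsum f' hf'
    have hcost' : MBcost n Km Kp d x f' = MBcost n Km Kp d x (flowOf n θ σ') := by
      unfold MBcost flowOf
      exact Finset.sum_congr rfl (fun j _ => Finset.sum_congr rfl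
        (fun k hk => by rw [hrow j k hk]))
    rw [hcost', flowOf_cost n Km Kp d x θ σs hσsI, flowOf_cost n Km Kp d x θ σ' hσ'I]
    exact hσsmin σ' ((hmemV σ').2 ⟨hσ'I, hσ'θ⟩)
  · -- the equivalence
    have hcostf : MBcost n Km Kp d x (flowOf n θ σs) = ∑ j, -(d j (σs j) * x j) :=
      flowOf_cost n Km Kp d x θ σs hσsI
    have hIccSet : ∀ (k : ℤ), k ∈ Finset.Icc Km Kp → k ∈ Set.Icc Km Kp := by
      intro k hk; simp only [Finset.mem_Icc] at hk; simpa [Set.mem_Icc] using hk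
    have hbandself : ∀ (j : Fin n) (k : ℤ), k ∈ Finset.Icc Km Kp →
        inBand (d j) Km k (d j k) := by
      intro j k hk
      simp only [Finset.mem_Icc] at hk
      unfold inBand
      split_ifs with h
      · rw [h]
      · refine ⟨?_, le_refl _⟩
        exact hmono j (by simp only [Set.mem_Icc]; omega)
          (by simp only [Set.mem_Icc]; omega) (by omega)
    constructor
    · -- forward
      intro hAll
      have hfeas : ∀ j, d j Km ≤ d j (σs j) ∧ d j (σs j) ≤ d j Kp := by
        intro j
        have hm := hIccSet (σs j) (hσsI j)
        have hmem := Finset.mem_Icc.1 (hσsI j)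
        constructor
        · exact (hmono j).monotoneOn
            (hIccSet Km (Finset.mem_Icc.2 ⟨le_refl _, hKK⟩)) hm hmem.1
        · exact (hmono j).monotoneOn hm
            (hIccSet Kp (Finset.mem_Icc.2 ⟨hKK, le_refl _⟩)) hmem.2
      have hcounts : ∀ k ∈ Finset.Icc Km Kp,
          Finset.univ.filter (fun j => inBand (d j) Km k (d j (σs j)))
            = Finset.univ.filter (fun j => σs j = k) := by
        intro k hk
        ext j
        simp only [Finset.mem_filter, Finset.mem_univ, true_and]
        constructor
        · intro hband
          exact (band_unique (d j) Km Kp (hmono j) (σs j) k (hσsI j) hk (d j (σs j))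
            (hbandself j (σs j) (hσsI j)) hband)
        · intro h; rw [h]; exact hbandself j k hk
      have := hAll (fun j => d j (σs j)) hfeas (by
        intro k hk
        rw [hcounts k hk, hσsθ k hk]
        exact ⟨hθl k hk, hθu k hk⟩)
      have hexp : ∑ j, (abar j + d j (σs j)) * x j
          = (∑ j, abar j * x j) + ∑ j, d j (σs j) * x j := by
        rw [← Finset.sum_add_distrib]
        exact Finset.sum_congr rfl (fun j _ => by ring)
      rw [hcostf]
      have hneg : ∑ j, -(d j (σs j) * x j) = -∑ j, d j (σs j) * x j := by
        rw [← Finset.sum_neg_distrib]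
      rw [hneg]
      linarith [hexp ▸ this]
    · -- backward
      intro hle S hS hcount
      -- choose bands for scenario values
      have hbands : ∀ j : Fin n, ∃ k ∈ Finset.Icc Km Kp, inBand (d j) Km k (S j) :=
        fun j => band_exists (d j) Km Kp hKK (hmono j) (S j) (hS j).1 (hS j).2
      choose kb hkbI hkb using hbands
      -- inBand filters equal kb fibers
      have hfe : ∀ q ∈ Finset.Icc Km Kp,
          Finset.univ.filter (fun j => inBand (d j) Km q (S j))
            = Finset.univ.filter (fun j => kb j = q) := by
        intro q hq
        ext j
        simp only [Finset.mem_filter, Finset.mem_univ, true_and]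
        constructor
        · intro hband
          exact band_unique (d j) Km Kp (hmono j) (kb j) q (hkbI j) hq (S j) (hkb j) hband
        · intro h; rw [← h]; exact hkb j
      set c : ℤ → ℤ := fun q => ((Finset.univ.filter (fun j => kb j = q)).card : ℤ) with hc
      have hcb : ∀ k ∈ Finset.Icc Km Kp, l k ≤ c k ∧ c k ≤ u k := by
        intro k hk
        have := hcount k hk
        rw [hfe k hk] at this
        exact this
      have hcsum : ∑ k ∈ Finset.Icc Km Kp, c k = (n:ℤ) := by
        have := Finset.card_eq_sum_card_fiberwise
          (f := kb) (s := Finset.univ) (t := Finset.Icc Km Kp) (fun j _ => hkbI j)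
        simp only [Finset.card_univ, Fintype.card_fin] at this
        rw [hc]
        push_cast
        exact_mod_cast this.symm
      -- rearrange to get a θ-profile assignment dominating kb
      obtain ⟨σ, hσ1, hσ2⟩ := rearrange n ((Kp - Km).toNat) Km Kp hKK rfl Finset.univ
        kb θ (fun j _ => hkbI j) hθ0
        (by
          intro q hq
          simp only [Finset.mem_Icc] at hq
          have hfib := Finset.card_eq_sum_card_fiberwise
            (f := kb) (s := Finset.univ.filter (fun j => kb j ≤ q))
            (t := Finset.Icc Km q)
            (fun j hj => by
              simp only [Finset.mem_coe, Finset.mem_filter, Finset.mem_univ, true_and] at hj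
              have := hkbI j
              simp only [Finset.mem_coe, Finset.mem_Icc] at this ⊢
              omega)
          have hfib2 : ∀ i ∈ Finset.Icc Km q,
              ((Finset.univ.filter (fun j => kb j ≤ q)).filter (fun j => kb j = i))
                = Finset.univ.filter (fun j => kb j = i) := by
            intro i hi
            simp only [Finset.mem_Icc] at hi
            rw [Finset.filter_filter]
            apply Finset.filter_congr
            intro j _
            constructor
            · intro h; exact h.2
            · intro h; exact ⟨by omega, h⟩
          have hcard : ((Finset.univ.filter (fun j => kb j ≤ q)).card : ℤ)
              = ∑ i ∈ Finset.Icc Km q, c i := by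
            rw [hfib]
            rw [Finset.sum_congr rfl (fun i hi => congrArg Finset.card (hfib2 i hi))]
            rw [hc]
            push_cast
            rfl
          rw [hcard]
          exact hkey c hcb hcsum q hq.1 hq.2)
        (by simp only [Finset.card_univ, Fintype.card_fin]; exact hθsum)
      have hσI : ∀ j, σ j ∈ Finset.Icc Km Kp := fun j => (hσ1 j (Finset.mem_univ j)).2
      have hσV : σ ∈ V := (hmemV σ).2 ⟨hσI, hσ2⟩
      have hmin := hσsmin σ hσV
      -- pointwise bound S j ≤ d j (σ j)
      have hptwise : ∀ j, S j * x j ≤ d j (σ j) * x j := by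
        intro j
        apply mul_le_mul_of_nonneg_right _ (hx j)
        have h1 : S j ≤ d j (kb j) := band_le (d j) Km (kb j) (S j) (hkb j)
        have h2 : d j (kb j) ≤ d j (σ j) :=
          (hmono j).monotoneOn (hIccSet _ (hkbI j)) (hIccSet _ (hσI j))
            (hσ1 j (Finset.mem_univ j)).1
        linarith
      have hsum1 : ∑ j, (abar j + S j) * x j
          = (∑ j, abar j * x j) + ∑ j, S j * x j := by
        rw [← Finset.sum_add_distrib]
        exact Finset.sum_congr rfl (fun j _ => by ring)
      have hsum2 : ∑ j, S j * x j ≤ ∑ j, d j (σ j) * x j :=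
        Finset.sum_le_sum (fun j _ => hptwise j)
      rw [hcostf] at hle
      have hneg : ∑ j, -(d j (σs j) * x j) = -∑ j, d j (σs j) * x j := by
        rw [← Finset.sum_neg_distrib]
      have hneg2 : ∑ j, -(d j (σ j) * x j) = -∑ j, d j (σ j) * x j := by
        rw [← Finset.sum_neg_distrib]
      rw [hneg] at hle
      simp only [hneg, hneg2] at hmin
      rw [hsum1]
      linarith
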